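/- The kernel K_α satisfies the differential–difference identity (u·∂/∂u + z̄·∂/∂z̄ + α)K_α(φ,s;z,u) = −((−1/2+is)(−α+1/2+is)/(2is))·K_α(φ,s+i;z,u) + ((1/2+is)(α−1/2+is)/(2is))·K_α(φ,s−i;z,u) − ((−α+1/2+is)/(2is(−1/2+is)))·∂²/∂φ² K_α(φ,s+i;z,u), for all z,u∈D, φ∈[0,2π], and s∈ℂ for which all terms are defined (s∉{0, −i/2}). -/

import Mathlib

open MeasureTheory Metric Set
open scoped Real

noncomputable section

/-- The open unit disk in ℂ. -/
def Disk : Set ℂ := Metric.ball (0 : ℂ) 1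

/-- The kernel `K_α(φ,s;z,u)` written as a holomorphic function of the variables `v = z̄`
and `u`; thus `K_α(φ,s;z,u) = KB α φ s z̄ u`. -/
def KB (α : ℝ) (φ : ℝ) (s : ℂ) (v u : ℂ) : ℂ :=
  (1 - v * Complex.exp (Complex.I * φ)) ^ (-(1/2 : ℂ) - Complex.I * s) *
  (1 - u * Complex.exp (-(Complex.I * φ))) ^ (-(1/2 : ℂ) - Complex.I * s) *
  (1 - v * u) ^ (-((α : ℂ) - 1/2 - Complex.I * s))

lemma slit_aux {w : ℂ} (hw : ‖w‖ < 1) : 1 - w ∈ Complex.slitPlane := by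
  rw [sub_eq_add_neg]
  exact Complex.mem_slitPlane_of_norm_lt_one (by simpa using hw)

lemma ne_aux {w : ℂ} (hw : ‖w‖ < 1) : 1 - w ≠ 0 := by
  intro h; rw [sub_eq_zero] at h; rw [← h] at hw; norm_num at hw

lemma norm_exp_I (ψ : ℝ) : ‖Complex.exp (Complex.I * ψ)‖ = 1 := by
  rw [Complex.norm_exp]; simp [Complex.mul_re]

lemma norm_exp_negI (ψ : ℝ) : ‖Complex.exp (-(Complex.I * ψ))‖ = 1 := by
  rw [Complex.norm_exp]; simp [Complex.mul_re]

lemma norm_mul_exp_I {v : ℂ} (hv : ‖v‖ < 1) (ψ : ℝ) : ‖v * Complex.exp (Complex.I * ψ)‖ < 1 := by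
  rw [norm_mul, norm_exp_I, mul_one]; exact hv

lemma norm_mul_exp_negI {v : ℂ} (hv : ‖v‖ < 1) (ψ : ℝ) :
    ‖v * Complex.exp (-(Complex.I * ψ))‖ < 1 := by
  rw [norm_mul, norm_exp_negI, mul_one]; exact hv

lemma cpow_shift {x : ℂ} (hx : x ≠ 0) (t : ℂ) : x ^ t = x ^ (t - 1) * x := by
  conv_lhs => rw [show t = (t - 1) + 1 by ring]
  rw [Complex.cpow_add _ _ hx, Complex.cpow_one]

lemma hasDerivAt_IofReal (ψ : ℝ) : HasDerivAt (fun t : ℝ => Complex.I * (t : ℂ)) Complex.I ψ := by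
  simpa using (Complex.ofRealCLM.hasDerivAt (x := ψ)).const_mul Complex.I

lemma phiDeriv (v u : ℂ) (hv : ‖v‖ < 1) (hu : ‖u‖ < 1) (a b c : ℂ) (ψ : ℝ) :
    HasDerivAt (fun t : ℝ => (1 - v * Complex.exp (Complex.I * t)) ^ a *
        (1 - u * Complex.exp (-(Complex.I * t))) ^ b * (1 - v * u) ^ c)
      (Complex.I *
        (a * ((1 - v * Complex.exp (Complex.I * ψ)) ^ a -
              (1 - v * Complex.exp (Complex.I * ψ)) ^ (a - 1)) *
           (1 - u * Complex.exp (-(Complex.I * ψ))) ^ b -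
         b * (1 - v * Complex.exp (Complex.I * ψ)) ^ a *
           ((1 - u * Complex.exp (-(Complex.I * ψ))) ^ b -
            (1 - u * Complex.exp (-(Complex.I * ψ))) ^ (b - 1))) *
        (1 - v * u) ^ c) ψ := by
  have hE : HasDerivAt (fun t : ℝ => Complex.exp (Complex.I * t))
      (Complex.exp (Complex.I * ψ) * Complex.I) ψ := (hasDerivAt_IofReal ψ).cexp
  have hE' : HasDerivAt (fun t : ℝ => Complex.exp (-(Complex.I * t)))
      (Complex.exp (-(Complex.I * ψ)) * -Complex.I) ψ := (hasDerivAt_IofReal ψ).neg.cexp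
  have hA : HasDerivAt (fun t : ℝ => 1 - v * Complex.exp (Complex.I * t))
      (-(v * (Complex.exp (Complex.I * ψ) * Complex.I))) ψ := (hE.const_mul v).const_sub 1
  have hB : HasDerivAt (fun t : ℝ => 1 - u * Complex.exp (-(Complex.I * t)))
      (-(u * (Complex.exp (-(Complex.I * ψ)) * -Complex.I))) ψ := (hE'.const_mul u).const_sub 1
  have hAslit : (1 - v * Complex.exp (Complex.I * ψ)) ∈ Complex.slitPlane :=
    slit_aux (norm_mul_exp_I hv ψ)
  have hBslit : (1 - u * Complex.exp (-(Complex.I * ψ))) ∈ Complex.slitPlane :=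
    slit_aux (norm_mul_exp_negI hu ψ)
  have hAp : HasDerivAt (fun t : ℝ => (1 - v * Complex.exp (Complex.I * t)) ^ a)
      (a * (1 - v * Complex.exp (Complex.I * ψ)) ^ (a - 1) *
        -(v * (Complex.exp (Complex.I * ψ) * Complex.I))) ψ :=
    (Complex.hasStrictDerivAt_cpow_const (c := a) hAslit).hasDerivAt.comp (h₂ := fun w : ℂ => w ^ a) ψ hA
  have hBp : HasDerivAt (fun t : ℝ => (1 - u * Complex.exp (-(Complex.I * t))) ^ b)
      (b * (1 - u * Complex.exp (-(Complex.I * ψ))) ^ (b - 1) *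
        -(u * (Complex.exp (-(Complex.I * ψ)) * -Complex.I))) ψ :=
    (Complex.hasStrictDerivAt_cpow_const (c := b) hBslit).hasDerivAt.comp (h₂ := fun w : ℂ => w ^ b) ψ hB
  have h := (hAp.mul hBp).mul_const ((1 - v * u) ^ c)
  refine h.congr_deriv ?_
  have sA : (1 - v * Complex.exp (Complex.I * ψ)) ^ a
      = (1 - v * Complex.exp (Complex.I * ψ)) ^ (a - 1) * (1 - v * Complex.exp (Complex.I * ψ)) :=
    cpow_shift (ne_aux (norm_mul_exp_I hv ψ)) a
  have sB : (1 - u * Complex.exp (-(Complex.I * ψ))) ^ b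
      = (1 - u * Complex.exp (-(Complex.I * ψ))) ^ (b - 1) *
        (1 - u * Complex.exp (-(Complex.I * ψ))) :=
    cpow_shift (ne_aux (norm_mul_exp_negI hu ψ)) b
  rw [sA, sB]
  ring

lemma Imm (w x y z : ℂ) :
    Complex.I * w * (Complex.I * x * z - Complex.I * y * z) = -(w * (x * z - y * z)) := by
  linear_combination (w * (x * z - y * z)) * Complex.I_mul_I

lemma clear_denoms (M₁ M₂ c₁ c₂ c₃ K₁ K₂ D L : ℂ) (h₁ : M₁ ≠ 0) (h₂ : M₂ ≠ 0)
    (key : M₁ * M₂ * L = -(M₂ * c₁ * K₁) + M₂ * c₂ * K₂ - c₃ * D) :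
    L = -(c₁ / M₁) * K₁ + c₂ / M₁ * K₂ - c₃ / (M₁ * M₂) * D := by
  apply mul_left_cancel₀ (mul_ne_zero h₁ h₂)
  rw [key]
  field_simp

set_option maxHeartbeats 4000000 in
/-- Identity (14): the differential–difference identity for the kernel,
`(u∂/∂u + z̄∂/∂z̄ + α)K_α(φ,s;z,u)
  = -((-1/2+is)(-α+1/2+is)/(2is))K_α(φ,s+i;z,u) + ((1/2+is)(α-1/2+is)/(2is))K_α(φ,s-i;z,u)
    - ((-α+1/2+is)/(2is(-1/2+is)))∂²/∂φ² K_α(φ,s+i;z,u)`,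
for all `z,u ∈ D`, `φ ∈ [0,2π]`, and `s ∈ ℂ` with `s ∉ {0, -i/2}`. -/
theorem stmt_9 (α : ℝ) (hα : 1 < α) (z u : ℂ) (hz : z ∈ Disk) (hu : u ∈ Disk)
    (φ : ℝ) (hφ : φ ∈ Set.Icc (0:ℝ) (2*π)) (s : ℂ)
    (hs0 : s ≠ 0) (hs1 : s ≠ -Complex.I / 2) :
    u * deriv (fun u' => KB α φ s (starRingEnd ℂ z) u') u
      + (starRingEnd ℂ z) * deriv (fun v => KB α φ s v u) (starRingEnd ℂ z)
      + (α : ℂ) * KB α φ s (starRingEnd ℂ z) u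
    = -(((-(1/2 : ℂ) + Complex.I * s) * (-(α : ℂ) + 1/2 + Complex.I * s)) /
          (2 * Complex.I * s)) * KB α φ (s + Complex.I) (starRingEnd ℂ z) u
      + (((1/2 : ℂ) + Complex.I * s) * ((α : ℂ) - 1/2 + Complex.I * s)) /
          (2 * Complex.I * s) * KB α φ (s - Complex.I) (starRingEnd ℂ z) u
      - ((-(α : ℂ) + 1/2 + Complex.I * s) /
          (2 * Complex.I * s * (-(1/2 : ℂ) + Complex.I * s))) *
        deriv (deriv (fun ψ : ℝ => KB α ψ (s + Complex.I) (starRingEnd ℂ z) u)) φ := by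
  have hzn : ‖z‖ < 1 := by simpa [Disk, mem_ball_zero_iff] using hz
  have hun : ‖u‖ < 1 := by simpa [Disk, mem_ball_zero_iff] using hu
  set v : ℂ := (starRingEnd ℂ) z with hvdef
  have hvn : ‖v‖ < 1 := by rw [hvdef]; rwa [RCLike.norm_conj]
  have hvu : ‖v * u‖ < 1 := by
    rw [norm_mul]
    nlinarith [norm_nonneg v, norm_nonneg u]
  have hAne : (1 - v * Complex.exp (Complex.I * (φ:ℂ))) ≠ 0 := ne_aux (norm_mul_exp_I hvn φ)
  have hBne : (1 - u * Complex.exp (-(Complex.I * (φ:ℂ)))) ≠ 0 := ne_aux (norm_mul_exp_negI hun φ)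
  have hCne : (1 - v * u) ≠ 0 := ne_aux hvu
  have hAslit : (1 - v * Complex.exp (Complex.I * (φ:ℂ))) ∈ Complex.slitPlane :=
    slit_aux (norm_mul_exp_I hvn φ)
  have hBslit : (1 - u * Complex.exp (-(Complex.I * (φ:ℂ)))) ∈ Complex.slitPlane :=
    slit_aux (norm_mul_exp_negI hun φ)
  have hCslit : (1 - v * u) ∈ Complex.slitPlane := slit_aux hvu
  simp only [KB]
  rw [show -(1/2:ℂ) - Complex.I * (s + Complex.I) = (-(1/2:ℂ) - Complex.I * s) + 1 from by
        linear_combination -Complex.I_mul_I,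
      show -((α:ℂ) - 1/2 - Complex.I * (s + Complex.I))
          = (-((α:ℂ) - 1/2 - Complex.I * s)) - 1 from by linear_combination Complex.I_mul_I,
      show -(1/2:ℂ) - Complex.I * (s - Complex.I) = (-(1/2:ℂ) - Complex.I * s) - 1 from by
        linear_combination Complex.I_mul_I,
      show -((α:ℂ) - 1/2 - Complex.I * (s - Complex.I))
          = (-((α:ℂ) - 1/2 - Complex.I * s)) + 1 from by linear_combination -Complex.I_mul_I]
  set p : ℂ := -(1/2:ℂ) - Complex.I * s with hp
  set q : ℂ := -((α:ℂ) - 1/2 - Complex.I * s) with hq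
  -- derivative in u
  have hBu : HasDerivAt (fun u' : ℂ => 1 - u' * Complex.exp (-(Complex.I * (φ:ℂ))))
      (-(1 * Complex.exp (-(Complex.I * (φ:ℂ))))) u :=
    ((hasDerivAt_id u).mul_const _).const_sub 1
  have hBup : HasDerivAt (fun u' : ℂ => (1 - u' * Complex.exp (-(Complex.I * (φ:ℂ)))) ^ p)
      (p * (1 - u * Complex.exp (-(Complex.I * (φ:ℂ)))) ^ (p - 1) *
        -(1 * Complex.exp (-(Complex.I * (φ:ℂ))))) u := hBu.cpow_const hBslit
  have hCu : HasDerivAt (fun u' : ℂ => 1 - v * u') (-(v * 1)) u :=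
    ((hasDerivAt_id u).const_mul v).const_sub 1
  have hCup : HasDerivAt (fun u' : ℂ => (1 - v * u') ^ q)
      (q * (1 - v * u) ^ (q - 1) * -(v * 1)) u := hCu.cpow_const hCslit
  have hdu := (hBup.const_mul ((1 - v * Complex.exp (Complex.I * (φ:ℂ))) ^ p)).mul hCup
  -- derivative in v
  have hAv : HasDerivAt (fun v' : ℂ => 1 - v' * Complex.exp (Complex.I * (φ:ℂ)))
      (-(1 * Complex.exp (Complex.I * (φ:ℂ)))) v :=
    ((hasDerivAt_id v).mul_const _).const_sub 1
  have hAvp : HasDerivAt (fun v' : ℂ => (1 - v' * Complex.exp (Complex.I * (φ:ℂ))) ^ p)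
      (p * (1 - v * Complex.exp (Complex.I * (φ:ℂ))) ^ (p - 1) *
        -(1 * Complex.exp (Complex.I * (φ:ℂ)))) v := hAv.cpow_const hAslit
  have hCv : HasDerivAt (fun v' : ℂ => 1 - v' * u) (-(1 * u)) v :=
    ((hasDerivAt_id v).mul_const _).const_sub 1
  have hCvp : HasDerivAt (fun v' : ℂ => (1 - v' * u) ^ q)
      (q * (1 - v * u) ^ (q - 1) * -(1 * u)) v := hCv.cpow_const hCslit
  have hdv := (hAvp.mul_const ((1 - u * Complex.exp (-(Complex.I * (φ:ℂ)))) ^ p)).mul hCvp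
  -- second derivative in φ
  have hg : (deriv fun ψ : ℝ => (1 - v * Complex.exp (Complex.I * ψ)) ^ (p + 1) *
        (1 - u * Complex.exp (-(Complex.I * ψ))) ^ (p + 1) * (1 - v * u) ^ (q - 1))
      = fun ψ : ℝ => Complex.I * (p + 1) *
          ((1 - v * Complex.exp (Complex.I * ψ)) ^ (p + 1) *
              (1 - u * Complex.exp (-(Complex.I * ψ))) ^ (p + 1 - 1) * (1 - v * u) ^ (q - 1) -
            (1 - v * Complex.exp (Complex.I * ψ)) ^ (p + 1 - 1) *
              (1 - u * Complex.exp (-(Complex.I * ψ))) ^ (p + 1) * (1 - v * u) ^ (q - 1)) := by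
    funext ψ
    rw [(phiDeriv v u hvn hun (p + 1) (p + 1) (q - 1) ψ).deriv]
    ring
  have h2 := ((phiDeriv v u hvn hun (p + 1) (p + 1 - 1) (q - 1) φ).sub
      (phiDeriv v u hvn hun (p + 1 - 1) (p + 1) (q - 1) φ)).const_mul (Complex.I * (p + 1))
  simp only [Pi.mul_def] at hdu hdv
  simp only [Pi.sub_def] at h2
  rw [hdu.deriv, hdv.deriv, hg, h2.deriv, Imm]
  simp only [add_sub_cancel_right]
  -- power shift identities
  have sA1 : (1 - v * Complex.exp (Complex.I * (φ:ℂ))) ^ p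
      = (1 - v * Complex.exp (Complex.I * (φ:ℂ))) ^ (p - 1) *
        (1 - v * Complex.exp (Complex.I * (φ:ℂ))) := cpow_shift hAne p
  have sA2 : (1 - v * Complex.exp (Complex.I * (φ:ℂ))) ^ (p + 1)
      = (1 - v * Complex.exp (Complex.I * (φ:ℂ))) ^ (p - 1) *
        (1 - v * Complex.exp (Complex.I * (φ:ℂ))) * (1 - v * Complex.exp (Complex.I * (φ:ℂ))) := by
    rw [cpow_shift hAne (p + 1), add_sub_cancel_right, sA1]
  have sB1 : (1 - u * Complex.exp (-(Complex.I * (φ:ℂ)))) ^ p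
      = (1 - u * Complex.exp (-(Complex.I * (φ:ℂ)))) ^ (p - 1) *
        (1 - u * Complex.exp (-(Complex.I * (φ:ℂ)))) := cpow_shift hBne p
  have sB2 : (1 - u * Complex.exp (-(Complex.I * (φ:ℂ)))) ^ (p + 1)
      = (1 - u * Complex.exp (-(Complex.I * (φ:ℂ)))) ^ (p - 1) *
        (1 - u * Complex.exp (-(Complex.I * (φ:ℂ)))) *
        (1 - u * Complex.exp (-(Complex.I * (φ:ℂ)))) := by
    rw [cpow_shift hBne (p + 1), add_sub_cancel_right, sB1]
  have sC1 : (1 - v * u) ^ q = (1 - v * u) ^ (q - 1) * (1 - v * u) := cpow_shift hCne q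
  have sC2 : (1 - v * u) ^ (q + 1)
      = (1 - v * u) ^ (q - 1) * (1 - v * u) * (1 - v * u) := by
    rw [cpow_shift hCne (q + 1), add_sub_cancel_right, sC1]
  rw [sA2, sB2, sC2, sA1, sB1, sC1]
  have hh : (-(1/2:ℂ) + Complex.I * s) ≠ 0 := by
    intro h
    apply hs1
    linear_combination (-Complex.I) * h + s * Complex.I_mul_I
  have h2Is : (2 : ℂ) * Complex.I * s ≠ 0 :=
    mul_ne_zero (mul_ne_zero two_ne_zero Complex.I_ne_zero) hs0
  set E : ℂ := Complex.exp (Complex.I * (φ:ℂ)) with hEdef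
  set F : ℂ := Complex.exp (-(Complex.I * (φ:ℂ))) with hFdef
  set a : ℂ := (1 - v * E) ^ (p - 1) with hadef
  set b : ℂ := (1 - u * F) ^ (p - 1) with hbdef
  set c : ℂ := (1 - v * u) ^ (q - 1) with hcdef
  have hEF : E * F = 1 := by
    rw [hEdef, hFdef, ← Complex.exp_add]
    simp
  refine clear_denoms (2 * Complex.I * s) (-(1/2:ℂ) + Complex.I * s) _ _ _ _ _ _ _ h2Is hh ?_
  linear_combination (((-1:ℂ)/4)*u*v*a*b*c + ((-1:ℂ)/2)*u*v*(Complex.I*s)*a*b*c + (1:ℂ)*u*v*(Complex.I*s)^2*a*b*c + (2:ℂ)*u*v*(Complex.I*s)^3*a*b*c + ((1:ℂ)/2)*u*v*(α:ℂ)*a*b*c + (1:ℂ)*u*v*(α:ℂ)*(Complex.I*s)*a*b*c + (-4:ℂ)*u*v*(α:ℂ)*(Complex.I*s)^2*a*b*c + ((1:ℂ)/2)*u*v^2*E*(Complex.I*s)*a*b*c + (-2:ℂ)*u*v^2*E*(Complex.I*s)^3*a*b*c + (-1:ℂ)*u*v^2*E*(α:ℂ)*(Complex.I*s)*a*b*c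 + (2:ℂ)*u*v^2*E*(α:ℂ)*(Complex.I*s)^2*a*b*c + ((1:ℂ)/2)*u^2*v*F*(Complex.I*s)*a*b*c + (-2:ℂ)*u^2*v*F*(Complex.I*s)^3*a*b*c + (-1:ℂ)*u^2*v*F*(α:ℂ)*(Complex.I*s)*a*b*c + (2:ℂ)*u^2*v*F*(α:ℂ)*(Complex.I*s)^2*a*b*c + ((1:ℂ)/8)*u^2*v^2*a*b*c + ((-1:ℂ)/4)*u^2*v^2*(Complex.I*s)*a*b*c + ((-1:ℂ)/2)*u^2*v^2*(Complex.I*s)^2*a*b*c + (1:ℂ)*u^2*v^2*(Complex.I*s)^3*a*b*c + ((-1:ℂ)/4)*u^2*v^2*(α:ℂ)*a*b*c + (1:ℂ)*u^2*v^2*(α:ℂ)*(Complex.I*s)^2*a*b*c + ((1:ℂ)/8)*u^2*v^2*E*F*a*b*c + ((-1:ℂ)/4)*u^2*v^2*E*F*(Complex.I*s)*a*b*c + ((-1:ℂ)/2)*u^2*v^2*E*F*(Complex.I*s)^2*a*b*c + (1:ℂ)*u^2*v^2*E*F*(Complex.I*s)^3*a*b*c + ((-1:ℂ)/4)*u^2*v^2*E*F*(α:ℂ)*a*b*c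 + (1:ℂ)*u^2*v^2*E*F*(α:ℂ)*(Complex.I*s)*a*b*c + (-1:ℂ)*u^2*v^2*E*F*(α:ℂ)*(Complex.I*s)^2*a*b*c) * hEF + (((1:ℂ)/2)*v*E*a*b*c + (2:ℂ)*v*E*(Complex.I*s)*a*b*c + (-2:ℂ)*v*E*(Complex.I*s)^2*a*b*c + (-1:ℂ)*v*E*(α:ℂ)*a*b*c + ((-3:ℂ)/4)*v^2*E^2*a*b*c + ((-1:ℂ)/2)*v^2*E^2*a*b*c*p + (-1:ℂ)*v^2*E^2*(Complex.I*s)*a*b*c + (-1:ℂ)*v^2*E^2*(Complex.I*s)*a*b*c*p + (1:ℂ)*v^2*E^2*(Complex.I*s)^2*a*b*c + ((3:ℂ)/2)*v^2*E^2*(α:ℂ)*a*b*c + (1:ℂ)*v^2*E^2*(α:ℂ)*a*b*c*p + (-1:ℂ)*v^2*E^2*(α:ℂ)*(Complex.I*s)*a*b*c + ((1:ℂ)/2)*u*F*a*b*c + (2:ℂ)*u*F*(Complex.I*s)*a*b*c + (-2:ℂ)*u*F*(Complex.I*s)^2*a*b*c + (-1:ℂ)*u*F*(α:ℂ)*a*b*c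 + ((-1:ℂ)/2)*u*v*E*F*a*b*c + (1:ℂ)*u*v*E*F*a*b*c*p + (-4:ℂ)*u*v*E*F*(Complex.I*s)*a*b*c + (2:ℂ)*u*v*E*F*(Complex.I*s)*a*b*c*p + (2:ℂ)*u*v*E*F*(Complex.I*s)^2*a*b*c + (1:ℂ)*u*v*E*F*(α:ℂ)*a*b*c + (-2:ℂ)*u*v*E*F*(α:ℂ)*a*b*c*p + (2:ℂ)*u*v*E*F*(α:ℂ)*(Complex.I*s)*a*b*c + (-1:ℂ)*u*v^2*E*(Complex.I*s)*a*b*c + (2:ℂ)*u*v^2*E*(Complex.I*s)^2*a*b*c + ((1:ℂ)/2)*u*v^2*E^2*F*a*b*c + (1:ℂ)*u*v^2*E^2*F*(Complex.I*s)*a*b*c + (-1:ℂ)*u*v^2*E^2*F*(α:ℂ)*a*b*c + ((-3:ℂ)/4)*u^2*F^2*a*b*c + ((-1:ℂ)/2)*u^2*F^2*a*b*c*p + (-1:ℂ)*u^2*F^2*(Complex.I*s)*a*b*c + (-1:ℂ)*u^2*F^2*(Complex.I*s)*a*b*c*p + (1:ℂ)*u^2*F^2*(Complex.I*s)^2*a*b*c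 + ((3:ℂ)/2)*u^2*F^2*(α:ℂ)*a*b*c + (1:ℂ)*u^2*F^2*(α:ℂ)*a*b*c*p + (-1:ℂ)*u^2*F^2*(α:ℂ)*(Complex.I*s)*a*b*c + (-1:ℂ)*u^2*v*F*(Complex.I*s)*a*b*c + (2:ℂ)*u^2*v*F*(Complex.I*s)^2*a*b*c + ((1:ℂ)/2)*u^2*v*E*F^2*a*b*c + (1:ℂ)*u^2*v*E*F^2*(Complex.I*s)*a*b*c + (-1:ℂ)*u^2*v*E*F^2*(α:ℂ)*a*b*c + (2:ℂ)*u^2*v^2*E*F*(Complex.I*s)*a*b*c + (-4:ℂ)*u^2*v^2*E*F*(Complex.I*s)^2*a*b*c) * hp + ((2:ℂ)*u*v*(Complex.I*s)*a*b*c + (-4:ℂ)*u*v*(Complex.I*s)^2*a*b*c + (-2:ℂ)*u*v^2*E*(Complex.I*s)*a*b*c + (4:ℂ)*u*v^2*E*(Complex.I*s)^2*a*b*c + (-2:ℂ)*u^2*v*F*(Complex.I*s)*a*b*c + (4:ℂ)*u^2*v*F*(Complex.I*s)^2*a*b*c + (2:ℂ)*u^2*v^2*E*F*(Complex.I*s)*a*b*c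 + (-4:ℂ)*u^2*v^2*E*F*(Complex.I*s)^2*a*b*c) * hq
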